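/- Let φ ∈ 𝒮(ℝ) and let f^W_φ be its Wigner function. Then for every Borel set B ⊆ ℝ, ∫_B ∫_ℝ f^W_φ(q,p) dq dp = ∫_B |(Fφ)(p)|² dp, where F is the Fourier–Plancherel transform. Hence the Weyl quantization of χ_{ℝ×B} is the spectral projection E^P(B) of momentum. -/

import Mathlib

open MeasureTheory

noncomputable section

namespace Statement17Aux

lemma norm_exp_I_mul (p t : ℝ) : ‖Complex.exp (Complex.I * p * t)‖ = 1 := by
  rw [show Complex.I * p * t = ((p * t : ℝ) : ℂ) * Complex.I by push_cast; ring]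
  exact Complex.norm_exp_ofReal_mul_I _

lemma integrable_conj {f : ℝ → ℂ} (hf : Integrable f) :
    Integrable (fun x => (starRingEnd ℂ) (f x)) := by
  have := (RCLike.conjCLE (K := ℂ)).toContinuousLinearMap.integrable_comp hf
  simpa using this

lemma key (φ : SchwartzMap ℝ ℂ) (p : ℝ) :
    (∫ q : ℝ, ∫ y : ℝ, Complex.exp (Complex.I * p * y) *
        φ (q + y / 2) * (starRingEnd ℂ) (φ (q - y / 2)))
      = (∫ x : ℝ, Complex.exp (Complex.I * p * x) * φ x) *
        (starRingEnd ℂ) (∫ x : ℝ, Complex.exp (Complex.I * p * x) * φ x) := by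
  set c : ℂ := ∫ x : ℝ, Complex.exp (Complex.I * p * x) * φ x with hc
  have hφi : Integrable (fun x : ℝ => (φ x : ℂ)) := φ.integrable
  have hφc : Continuous (fun x : ℝ => (φ x : ℂ)) := φ.continuous
  have hg : Integrable (fun x : ℝ => (starRingEnd ℂ) (φ (-x))) := by
    apply integrable_conj
    have := hφi.comp_mul_left' (R := (-1 : ℝ)) (by norm_num)
    simpa using this
  have hH0 : Integrable (fun z : ℝ × ℝ => (φ z.2 : ℂ) * (starRingEnd ℂ) (φ (z.2 - z.1)))
      (volume.prod volume) := by
    have := hφi.convolution_integrand (ContinuousLinearMap.mul ℝ ℂ) hg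
    simpa [neg_sub] using this
  have hHcont : Continuous (fun z : ℝ × ℝ => Complex.exp (Complex.I * p * z.1) *
      (φ z.2 * (starRingEnd ℂ) (φ (z.2 - z.1)))) := by
    apply Continuous.mul
    · exact Complex.continuous_exp.comp (by fun_prop)
    · exact (hφc.comp continuous_snd).mul
        (Complex.continuous_conj.comp (hφc.comp (continuous_snd.sub continuous_fst)))
  have hH : Integrable (fun z : ℝ × ℝ => Complex.exp (Complex.I * p * z.1) *
      (φ z.2 * (starRingEnd ℂ) (φ (z.2 - z.1)))) (volume.prod volume) := by
    refine hH0.bdd_mul (c := 1) ?_ (Filter.Eventually.of_forall fun z => le_of_eq (norm_exp_I_mul p z.1))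
    exact (Complex.continuous_exp.comp (by fun_prop)).aestronglyMeasurable
  have hT : MeasurePreserving (fun z : ℝ × ℝ => (z.1, z.1 / 2 + z.2))
      ((volume : Measure ℝ).prod volume) ((volume : Measure ℝ).prod volume) :=
    (MeasurePreserving.id volume).skew_product (g := fun x y => x / 2 + y)
      (by exact (measurable_fst.div_const 2).add measurable_snd)
      (Filter.Eventually.of_forall fun x => map_add_left_eq_self volume _)
  have hT2 : MeasurePreserving (fun z : ℝ × ℝ => (z.2, z.2 / 2 + z.1))
      ((volume : Measure ℝ).prod volume) ((volume : Measure ℝ).prod volume) :=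
    hT.comp Measure.measurePreserving_swap
  have hK : Integrable (fun z : ℝ × ℝ => Complex.exp (Complex.I * p * z.2) *
      φ (z.1 + z.2 / 2) * (starRingEnd ℂ) (φ (z.1 - z.2 / 2))) (volume.prod volume) := by
    have h := (hT2.integrable_comp hHcont.aestronglyMeasurable).2 hH
    refine h.congr (Filter.Eventually.of_forall fun z => ?_)
    simp only [Function.comp]
    rw [show z.2 / 2 + z.1 = z.1 + z.2 / 2 by ring]
    rw [show z.1 + z.2 / 2 - z.2 = z.1 - z.2 / 2 by ring]
    ring
  have hH' : Integrable (fun z : ℝ × ℝ => Complex.exp (Complex.I * p * z.1) *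
      φ z.2 * (starRingEnd ℂ) (φ (z.2 - z.1))) (volume.prod volume) :=
    hH.congr (Filter.Eventually.of_forall fun z => by ring)
  calc
    (∫ q : ℝ, ∫ y : ℝ, Complex.exp (Complex.I * p * y) *
        φ (q + y / 2) * (starRingEnd ℂ) (φ (q - y / 2)))
        = ∫ y : ℝ, ∫ q : ℝ, Complex.exp (Complex.I * p * y) *
            φ (q + y / 2) * (starRingEnd ℂ) (φ (q - y / 2)) :=
      integral_integral_swap hK
    _ = ∫ y : ℝ, ∫ u : ℝ, Complex.exp (Complex.I * p * y) *
          φ u * (starRingEnd ℂ) (φ (u - y)) := by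
      refine integral_congr_ae (Filter.Eventually.of_forall fun y => ?_)
      have h := integral_add_right_eq_self (μ := volume)
        (fun u : ℝ => Complex.exp (Complex.I * p * y) * φ u * (starRingEnd ℂ) (φ (u - y)))
        (y / 2)
      have h2 : ∀ q : ℝ, q + y / 2 - y = q - y / 2 := fun q => by ring
      simp only [h2] at h
      exact h
    _ = ∫ u : ℝ, ∫ y : ℝ, Complex.exp (Complex.I * p * y) *
          φ u * (starRingEnd ℂ) (φ (u - y)) :=
      integral_integral_swap hH'
    _ = ∫ u : ℝ, Complex.exp (Complex.I * p * u) * φ u * (starRingEnd ℂ) c := by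
      refine integral_congr_ae (Filter.Eventually.of_forall fun u => ?_)
      have h3 : ∀ y : ℝ, Complex.exp (Complex.I * p * y) * φ u * (starRingEnd ℂ) (φ (u - y))
          = (φ u : ℂ) * (Complex.exp (Complex.I * p * y) * (starRingEnd ℂ) (φ (u - y))) :=
        fun y => by ring
      simp only [h3]
      rw [integral_const_mul]
      have h4 := integral_sub_left_eq_self
        (fun v : ℝ => Complex.exp (Complex.I * p * ((u : ℂ) - (v : ℂ))) *
          (starRingEnd ℂ) (φ v)) volume u
      have h5 : ∀ y : ℝ, Complex.exp (Complex.I * p * y) * (starRingEnd ℂ) (φ (u - y))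
          = Complex.exp (Complex.I * p * ((u : ℂ) - ((u - y : ℝ) : ℂ))) *
            (starRingEnd ℂ) (φ (u - y)) := by
        intro y
        rw [show ((u : ℂ) - ((u - y : ℝ) : ℂ)) = (y : ℂ) by push_cast; ring]
      simp only [h5]
      rw [h4]
      have h6 : ∀ v : ℝ, Complex.exp (Complex.I * p * ((u : ℂ) - (v : ℂ))) *
          (starRingEnd ℂ) (φ v)
          = Complex.exp (Complex.I * p * u) *
            (starRingEnd ℂ) (Complex.exp (Complex.I * p * v) * φ v) := by
        intro v
        rw [map_mul]
        have hcj : (starRingEnd ℂ) (Complex.exp (Complex.I * p * v))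
            = Complex.exp (-(Complex.I * p * v)) := by
          rw [← Complex.exp_conj]
          congr 1
          simp [map_mul, Complex.conj_I, Complex.conj_ofReal]
        rw [hcj, show Complex.I * p * ((u : ℂ) - (v : ℂ))
          = Complex.I * p * u + -(Complex.I * p * v) by ring, Complex.exp_add]
        ring
      simp only [h6]
      rw [integral_const_mul, ← integral_conj]
      ring
    _ = c * (starRingEnd ℂ) c := by
      have h7 : ∀ u : ℝ, Complex.exp (Complex.I * p * u) * φ u * (starRingEnd ℂ) c
          = (Complex.exp (Complex.I * p * u) * φ u) * (starRingEnd ℂ) c := fun u => rfl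
      rw [integral_mul_const, ← hc]

end Statement17Aux

end

noncomputable section

theorem statement17 (φ : SchwartzMap ℝ ℂ) (fW : ℝ → ℝ → ℂ)
    (hfW : ∀ q p : ℝ, fW q p =
      ((2 * Real.pi)⁻¹ : ℂ) * ∫ y : ℝ, Complex.exp (Complex.I * p * y) *
        φ (q + y / 2) * (starRingEnd ℂ) (φ (q - y / 2)))
    (Fφ : ℝ → ℂ)
    (hF : ∀ p : ℝ, Fφ p =
      ((Real.sqrt (2 * Real.pi))⁻¹ : ℂ) * ∫ x : ℝ, Complex.exp (Complex.I * p * x) * φ x)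
    (B : Set ℝ) (hB : MeasurableSet B) :
    ∫ p in B, ∫ q : ℝ, fW q p = ∫ p in B, ((‖Fφ p‖ : ℂ)) ^ 2 := by
  refine integral_congr_ae (Filter.Eventually.of_forall fun p => ?_)
  simp only [hfW]
  rw [integral_const_mul, Statement17Aux.key φ p]
  set c : ℂ := ∫ x : ℝ, Complex.exp (Complex.I * p * x) * φ x with hc
  have h2π : (0:ℝ) ≤ 2 * Real.pi := by positivity
  have hcc : c * (starRingEnd ℂ) c = ((‖c‖ ^ 2 : ℝ) : ℂ) := by
    rw [Complex.mul_conj]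
    norm_cast
    rw [Complex.normSq_eq_norm_sq]
  have hnorm : ‖Fφ p‖ = (Real.sqrt (2 * Real.pi))⁻¹ * ‖c‖ := by
    rw [hF p, ← hc, norm_mul, norm_inv, Complex.norm_real, Real.norm_eq_abs,
      abs_of_nonneg (Real.sqrt_nonneg _)]
  rw [hcc, hnorm]
  norm_cast
  rw [mul_pow, inv_pow, Real.sq_sqrt h2π]
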